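/- arXiv:1710.05665 — 5 statements merged into one kernel-verified Lean document; each statement's English description precedes it below -/
import Mathlib

section
/- Let a ∈ H_R be invertible with inverse b. Then for all n ≥ 0, b_n = n! · B_n(g_0, g_1, ..., g_n) / a_0, where g_n = -a_{n+1}/(a_0 (n+1)!) and B_n denotes the complete ordinary Bell polynomial. -/
open Finset PowerSeries

variable {R : Type*} [CommRing R] [Algebra ℚ R]

/-- Binomial convolution of sequences. -/
def bconv (a b : ℕ → R) : ℕ → R :=
  fun n => ∑ h ∈ range (n + 1), (n.choose h : R) * a h * b (n - h)

/-- The identity sequence (1,0,0,...). -/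
def eseq : ℕ → R := fun n => if n = 0 then 1 else 0

/-- Partial ordinary Bell polynomial `B_{n,k}(x₁,x₂,…)`, for a sequence `x` indexed
from 1, defined as the coefficient of `z^n` in `(∑_{m≥1} x_m z^m)^k`. -/
noncomputable def pBell (n k : ℕ) (x : ℕ → R) : R :=
  PowerSeries.coeff (R := R) n ((PowerSeries.mk fun m => if m = 0 then 0 else x m) ^ k)

/-- Complete ordinary Bell polynomial `B_n(x₁,x₂,…)`. -/
noncomputable def cBell (n : ℕ) (x : ℕ → R) : R :=
  if n = 0 then 1 else ∑ k ∈ Icc 1 n, pBell n k x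

/-- If `b = a⁻¹` in the Hurwitz ring, then
`b n = n! ⬝ B_n(g₀,…,g_{n-1... n}) / a 0`, where `g m = -a (m+1) / (a 0 · (m+1)!)`. -/
theorem hurwitz_inverse_bell (a b : ℕ → R) (a0inv : R)
    (ha0 : a 0 * a0inv = 1) (hab : bconv a b = eseq)
    (g : ℕ → R)
    (hg : ∀ m : ℕ, g m = -(a (m + 1)) * a0inv * algebraMap ℚ R (1 / (m + 1).factorial)) :
    ∀ n : ℕ, b n = (n.factorial : R) * cBell n (fun i => g (i - 1)) * a0inv := by
  set α := algebraMap ℚ R with hα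
  -- basic fact: b 0 = a0inv
  have hb0 : a 0 * b 0 = 1 := by
    have := congrFun hab 0
    simpa [bconv, eseq] using this
  -- EGF power series
  set A : R⟦X⟧ := PowerSeries.mk (fun n => a n * α (1 / n.factorial)) with hA
  set B : R⟦X⟧ := PowerSeries.mk (fun n => b n * α (1 / n.factorial)) with hB
  have hfac : ∀ n : ℕ, ((n.factorial : ℚ)) ≠ 0 := fun n => by
    exact_mod_cast n.factorial_ne_zero
  have hAB : A * B = 1 := by
    ext n
    rw [PowerSeries.coeff_mul, Finset.Nat.sum_antidiagonal_eq_sum_range_succ_mk]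
    have key : ∀ h ∈ range (n + 1),
        (PowerSeries.coeff h A) * (PowerSeries.coeff (n - h) B)
          = α (1 / n.factorial) * ((n.choose h : R) * a h * b (n - h)) := by
      intro h hh
      rw [mem_range, Nat.lt_succ_iff] at hh
      have hq : (1 / h.factorial : ℚ) * (1 / (n - h).factorial)
          = 1 / n.factorial * (n.choose h : ℚ) := by
        rw [Nat.cast_choose ℚ hh]
        field_simp
      have : α (1 / h.factorial) * α (1 / (n - h).factorial)
          = α (1 / n.factorial) * (n.choose h : R) := by
        rw [← map_mul, hq, map_mul]
        norm_num
      simp only [hA, hB, coeff_mk]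
      calc a h * α (1 / h.factorial) * (b (n - h) * α (1 / (n - h).factorial))
          = (α (1 / h.factorial) * α (1 / (n - h).factorial)) * (a h * b (n - h)) := by ring
        _ = α (1 / n.factorial) * ((n.choose h : R) * a h * b (n - h)) := by rw [this]; ring
    rw [Finset.sum_congr rfl key, ← Finset.mul_sum]
    have := congrFun hab n
    rw [bconv] at this
    rw [this, eseq]
    rcases Nat.eq_zero_or_pos n with h0 | h0
    · subst h0; simp
    · simp [Nat.pos_iff_ne_zero.mp h0, PowerSeries.coeff_one]
  -- the series F
  set F : R⟦X⟧ := PowerSeries.mk (fun m => if m = 0 then 0 else g (m - 1)) with hF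
  have hFconst : constantCoeff F = 0 := by simp [hF, ← coeff_zero_eq_constantCoeff]
  have hFA : 1 - F = PowerSeries.C a0inv * A := by
    ext m
    rcases Nat.eq_zero_or_pos m with h0 | h0
    · subst h0
      simp [hF, hA, coeff_zero_eq_constantCoeff, mul_comm a0inv, ha0]
    · obtain ⟨m, rfl⟩ := Nat.exists_eq_succ_of_ne_zero (Nat.pos_iff_ne_zero.mp h0)
      rw [map_sub, PowerSeries.coeff_one, coeff_C_mul]
      simp only [hF, hA, coeff_mk, Nat.succ_ne_zero, if_false, Nat.succ_sub_one]
      rw [hg m]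
      ring
  intro n
  rcases Nat.eq_zero_or_pos n with h0 | h0
  · subst h0
    have : b 0 = a0inv := by
      calc b 0 = (a 0 * b 0) * a0inv := by rw [mul_comm (a 0), mul_assoc, ha0, mul_one]
        _ = a0inv := by rw [hb0, one_mul]
    simp [this, cBell]
  · have hn : n ≠ 0 := Nat.pos_iff_ne_zero.mp h0
    -- geometric sum
    set S : R⟦X⟧ := ∑ k ∈ range (n + 1), F ^ k with hS
    have hgeo : (1 - F) * S = 1 - F ^ (n + 1) := by
      have := mul_geom_sum F (n + 1)
      have h2 : (-(1 - F)) * S = -(1 - F ^ (n + 1)) := by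
        rw [hS]; rw [show -(1 - F) = F - 1 by ring, this]; ring
      linear_combination -h2
    -- S = C (a 0) * B * (1 - F^(n+1))
    have hSval : S = PowerSeries.C (a 0) * B * (1 - F ^ (n + 1)) := by
      calc S = (PowerSeries.C (a 0) * PowerSeries.C a0inv) * (A * B) * S := by
              rw [← map_mul, ha0, map_one, hAB, one_mul, one_mul]
        _ = PowerSeries.C (a 0) * B * ((PowerSeries.C a0inv * A) * S) := by ring
        _ = PowerSeries.C (a 0) * B * (1 - F ^ (n + 1)) := by rw [← hFA, hgeo]
    -- coeff n of the junk term is 0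
    have hjunk : PowerSeries.coeff n (PowerSeries.C (a 0) * B * F ^ (n + 1)) = 0 := by
      have hdvd : (X : R⟦X⟧) ^ (n + 1) ∣ PowerSeries.C (a 0) * B * F ^ (n + 1) :=
        Dvd.dvd.mul_left (pow_dvd_pow_of_dvd (X_dvd_iff.mpr hFconst) _) _
      exact (X_pow_dvd_iff.mp hdvd) n (Nat.lt_succ_self n)
    have hcoeffS : PowerSeries.coeff n S = a 0 * (b n * α (1 / n.factorial)) := by
      rw [hSval, mul_sub, mul_one, map_sub, hjunk, sub_zero, coeff_C_mul, hB, coeff_mk]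
    -- coeff n S = cBell n
    have hcB : cBell n (fun i => g (i - 1)) = PowerSeries.coeff n S := by
      rw [cBell, if_neg hn, hS, map_sum]
      have hr : range (n + 1) = insert 0 (Icc 1 n) := by
        ext x; simp [Nat.lt_succ_iff]; omega
      rw [hr, Finset.sum_insert (by simp)]
      have h00 : PowerSeries.coeff n (F ^ 0) = 0 := by
        simp [PowerSeries.coeff_one, hn]
      rw [h00, zero_add]
      exact Finset.sum_congr rfl fun k _ => rfl
    rw [hcB, hcoeffS]
    have hnf : (n.factorial : R) * α (1 / n.factorial) = 1 := by
      rw [show (n.factorial : R) = α (n.factorial : ℚ) by simp [hα],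
        ← map_mul, mul_one_div, div_self (hfac n), map_one]
    calc b n = b n * ((n.factorial : R) * α (1 / n.factorial)) * (a 0 * a0inv) := by
          rw [hnf, ha0, mul_one, mul_one]
      _ = (n.factorial : R) * (a 0 * (b n * α (1 / n.factorial))) * a0inv := by ring
end

section
/- If g ∈ H_R and h is the Invert transform of g, then for all n ≥ 0, h_n = B_{n+1}(g_0, g_1, ..., g_n), the complete ordinary Bell polynomial evaluated at the terms of g. -/
open Finset PowerSeries

variable {R : Type*} [CommRing R]

lemma mk_shift_eq (g : ℕ → R) :
    (PowerSeries.mk fun m => if m = 0 then (0 : R) else g (m - 1)) =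
      PowerSeries.X * PowerSeries.mk g := by
  ext m
  cases m with
  | zero => simp
  | succ m => simp [PowerSeries.coeff_succ_X_mul]

/-- If `h` is the Invert transform of `g`, i.e. the ordinary generating functions satisfy
`H = G / (1 - t·G)`, then `h n = B_{n+1}(g 0, g 1, …, g n)`. -/
theorem invert_transform_bell (g h : ℕ → R)
    (hinv : PowerSeries.mk h * (1 - PowerSeries.X * PowerSeries.mk g) = PowerSeries.mk g) :
    ∀ n : ℕ, h n = cBell (n + 1) (fun i => g (i - 1)) := by
  intro n
  set F : PowerSeries R := PowerSeries.X * PowerSeries.mk g with hF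
  set H : PowerSeries R := PowerSeries.X * PowerSeries.mk h with hH
  have base : H = F + F * H := by
    have := congrArg (fun p => PowerSeries.X * p) hinv
    simp only [mul_sub, mul_one] at this
    rw [hH, hF]
    ring_nf
    ring_nf at this
    linear_combination this
  have iter : ∀ m : ℕ, H = (∑ k ∈ Icc 1 m, F ^ k) + F ^ m * H := by
    intro m
    induction m with
    | zero => simp
    | succ m ih =>
      calc H = (∑ k ∈ Icc 1 m, F ^ k) + F ^ m * H := ih
        _ = (∑ k ∈ Icc 1 m, F ^ k) + F ^ m * (F + F * H) := by rw [← base]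
        _ = (∑ k ∈ Icc 1 (m + 1), F ^ k) + F ^ (m + 1) * H := by
            rw [Finset.sum_Icc_succ_top (by omega : 1 ≤ m + 1)]
            ring
  have hcoeff := congrArg (PowerSeries.coeff (R := R) (n + 1)) (iter (n + 1))
  have hvanish : PowerSeries.coeff (R := R) (n + 1) (F ^ (n + 1) * H) = 0 := by
    have hdvd : (PowerSeries.X : PowerSeries R) ^ (n + 2) ∣ F ^ (n + 1) * H := by
      refine ⟨(PowerSeries.mk g) ^ (n + 1) * PowerSeries.mk h, ?_⟩
      rw [hF, hH, mul_pow]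
      ring
    exact (PowerSeries.X_pow_dvd_iff.mp hdvd) (n + 1) (by omega)
  have hh : h n = PowerSeries.coeff (R := R) (n + 1) H := by
    rw [hH, PowerSeries.coeff_succ_X_mul, PowerSeries.coeff_mk]
  rw [hh, hcoeff, map_add, hvanish, add_zero, map_sum]
  rw [cBell, if_neg (by omega)]
  refine Finset.sum_congr rfl fun k _ => ?_
  rw [pBell, mk_shift_eq, hF]
end

section
/- The set B_R = {a ∈ H_R : a_0 = 1 and E(a) = a^{-1}}, where E is the alternating sign transform (E(a))_n = (-1)^n a_n, is a subgroup of the unit group of H_R under binomial convolution. -/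
open Finset

variable {R : Type*} [CommRing R]

/-- The alternating sign transform. -/
def alt (a : ℕ → R) : ℕ → R := fun n => (-1) ^ n * a n

/-- Membership in `B_R`: `a 0 = 1` and `E(a)` is the inverse of `a`. -/
def memBR (a : ℕ → R) : Prop := a 0 = 1 ∧ bconv a (alt a) = eseq

lemma bconv_comm (a b : ℕ → R) : bconv a b = bconv b a := by
  funext n
  unfold bconv
  rw [Finset.sum_nbij' (i := fun h => n - h) (j := fun h => n - h)]
  · intro h hh
    simp only [mem_range] at hh ⊢; omega
  · intro h hh
    simp only [mem_range] at hh ⊢; omega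
  · intro h hh; simp only [mem_range] at hh; omega
  · intro h hh; simp only [mem_range] at hh; omega
  · intro h hh
    simp only [mem_range] at hh
    rw [Nat.choose_symm (by omega), Nat.sub_sub_self (by omega)]
    ring

lemma bconv_eseq (a : ℕ → R) : bconv a eseq = a := by
  funext n
  unfold bconv eseq
  rw [Finset.sum_eq_single n]
  · simp
  · intro h hh hne
    simp only [mem_range] at hh
    have : n - h ≠ 0 := by omega
    simp [this]
  · intro h; simp at h

lemma eseq_bconv (a : ℕ → R) : bconv eseq a = a := by
  rw [bconv_comm, bconv_eseq]

lemma bconv_assoc (a b c : ℕ → R) : bconv (bconv a b) c = bconv a (bconv b c) := by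
  funext n
  unfold bconv
  simp only [Finset.sum_mul, Finset.mul_sum]
  rw [Finset.sum_sigma', Finset.sum_sigma']
  refine Finset.sum_nbij' (i := fun p => ⟨p.2, p.1 - p.2⟩)
    (j := fun p => ⟨p.1 + p.2, p.1⟩) ?_ ?_ ?_ ?_ ?_
  · rintro ⟨h, i⟩ hp
    simp only [Finset.mem_sigma, mem_range] at hp ⊢
    omega
  · rintro ⟨i, j⟩ hp
    simp only [Finset.mem_sigma, mem_range] at hp ⊢
    omega
  · rintro ⟨h, i⟩ hp
    simp only [Finset.mem_sigma, mem_range] at hp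
    have e : i + (h - i) = h := by omega
    simp [e]
  · rintro ⟨i, j⟩ hp
    simp only [Finset.mem_sigma, mem_range] at hp
    have e : i + j - i = j := by omega
    simp [e]
  · rintro ⟨h, i⟩ hp
    simp only [Finset.mem_sigma, mem_range] at hp
    have h1 : h ≤ n := by omega
    have h2 : i ≤ h := by omega
    have key : (n.choose h : R) * (h.choose i : R) = (n.choose i : R) * ((n - i).choose (h - i) : R) := by
      rw [← Nat.cast_mul, ← Nat.cast_mul, Nat.choose_mul h2]
    have e1 : n - h = (n - i) - (h - i) := by omega
    calc (n.choose h : R) * ((h.choose i : R) * a i * b (h - i)) * c (n - h)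
        = ((n.choose h : R) * (h.choose i : R)) * a i * b (h - i) * c (n - h) := by ring
      _ = ((n.choose i : R) * ((n - i).choose (h - i) : R)) * a i * b (h - i) * c (n - h) := by
          rw [key]
      _ = (n.choose i : R) * a i * (((n - i).choose (h - i) : R) * b (h - i) * c ((n - i) - (h - i))) := by
          rw [← e1]; ring

lemma alt_bconv (a b : ℕ → R) : alt (bconv a b) = bconv (alt a) (alt b) := by
  funext n
  unfold alt bconv
  rw [Finset.mul_sum]
  refine Finset.sum_congr rfl ?_
  intro h hh
  simp only [mem_range] at hh
  have : (-1 : R) ^ n = (-1) ^ h * (-1) ^ (n - h) := by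
    rw [← pow_add]; congr 1; omega
  rw [this]; ring

lemma alt_alt (a : ℕ → R) : alt (alt a) = a := by
  funext n
  unfold alt
  rw [← mul_assoc, ← mul_pow]
  simp

lemma alt_eseq : alt (eseq : ℕ → R) = eseq := by
  funext n
  unfold alt eseq
  cases n with
  | zero => simp
  | succ m => simp

/-- `B_R = {a : a 0 = 1, E(a) = a⁻¹}` is a subgroup of the unit group of `H_R`:
it contains the identity, is closed under products, and the inverse `E(a)` of any
`a ∈ B_R` is again in `B_R`. -/
theorem BR_subgroup :
    memBR (eseq : ℕ → R) ∧
    (∀ a b : ℕ → R, memBR a → memBR b → memBR (bconv a b)) ∧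
    (∀ a : ℕ → R, memBR a → memBR (alt a) ∧ bconv a (alt a) = eseq) := by
  refine ⟨⟨rfl, ?_⟩, ?_, ?_⟩
  · rw [alt_eseq, bconv_eseq]
  · rintro a b ⟨ha0, ha⟩ ⟨hb0, hb⟩
    constructor
    · show bconv a b 0 = 1
      simp [bconv, ha0, hb0]
    · rw [alt_bconv]
      calc bconv (bconv a b) (bconv (alt a) (alt b))
          = bconv a (bconv b (bconv (alt a) (alt b))) := bconv_assoc a b _
        _ = bconv a (bconv (bconv b (alt a)) (alt b)) := by
            rw [bconv_assoc b (alt a) (alt b)]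
        _ = bconv a (bconv (bconv (alt a) b) (alt b)) := by
            rw [bconv_comm b (alt a)]
        _ = bconv a (bconv (alt a) (bconv b (alt b))) := by
            rw [bconv_assoc (alt a) b (alt b)]
        _ = bconv (bconv a (alt a)) (bconv b (alt b)) := (bconv_assoc a (alt a) _).symm
        _ = eseq := by rw [ha, hb, bconv_eseq]
  · rintro a ⟨ha0, ha⟩
    refine ⟨⟨?_, ?_⟩, ha⟩
    · show (-1 : R) ^ 0 * a 0 = 1
      simp [ha0]
    · rw [alt_alt, bconv_comm, ha]
end

section
/- The formal power series B(t) = sec(t) + tan(t) satisfies B(t)·B(-t) = 1; hence the sequence of Euler zigzag numbers belongs to B_R, and B_R is closed under the Boustrophedon transform. -/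
open Finset PowerSeries

variable {R : Type*} [CommRing R] [Algebra ℚ R]

/-- The formal power series of cosine. -/
noncomputable def cosS : PowerSeries R :=
  PowerSeries.mk fun n =>
    if n % 2 = 0 then algebraMap ℚ R ((-1) ^ (n / 2) / n.factorial) else 0

/-- The formal power series of sine. -/
noncomputable def sinS : PowerSeries R :=
  PowerSeries.mk fun n =>
    if n % 2 = 1 then algebraMap ℚ R ((-1) ^ (n / 2) / n.factorial) else 0

/-- auxiliary: the sequence of `n! * coeff n`. -/
noncomputable def seqOf (A : PowerSeries R) : ℕ → R :=
  fun n => (n.factorial : R) * PowerSeries.coeff (R := R) n A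

lemma isUnit_nat_cast_of_ne_zero (n : ℕ) (hn : n ≠ 0) : IsUnit ((n : R)) := by
  have h : ((n : R)) = algebraMap ℚ R (n : ℚ) := by simp
  rw [h]
  exact (isUnit_iff_ne_zero.mpr (by exact_mod_cast hn)).map (algebraMap ℚ R)

lemma isUnit_factorial_cast (n : ℕ) : IsUnit ((n.factorial : R)) :=
  isUnit_nat_cast_of_ne_zero _ n.factorial_ne_zero

lemma seqOf_inj {A B : PowerSeries R} (h : seqOf A = seqOf B) : A = B := by
  ext n
  exact (isUnit_factorial_cast (R := R) n).mul_left_cancel (congrFun h n)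

lemma seqOf_mul (A B : PowerSeries R) : seqOf (A * B) = bconv (seqOf A) (seqOf B) := by
  funext n
  simp only [seqOf, bconv, PowerSeries.coeff_mul,
    Finset.Nat.sum_antidiagonal_eq_sum_range_succ_mk, Finset.mul_sum]
  refine Finset.sum_congr rfl fun h hh => ?_
  have hle : h ≤ n := Nat.lt_succ_iff.mp (Finset.mem_range.mp hh)
  have key : (n.choose h) * h.factorial * (n - h).factorial = n.factorial :=
    Nat.choose_mul_factorial_mul_factorial hle
  have keyR : ((n.choose h : R)) * (h.factorial : R) * ((n - h).factorial : R)
      = (n.factorial : R) := by exact_mod_cast congrArg (Nat.cast (R := R)) key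
  rw [← keyR]; ring

lemma seqOf_rescale (A : PowerSeries R) :
    seqOf (PowerSeries.rescale (-1) A) = alt (seqOf A) := by
  funext n
  simp only [seqOf, alt, PowerSeries.coeff_rescale]
  ring

lemma seqOf_one : seqOf (1 : PowerSeries R) = eseq := by
  funext n
  simp only [seqOf, eseq, PowerSeries.coeff_one]
  by_cases h : n = 0 <;> simp [h]

lemma memBR_seqOf {C : PowerSeries R} (h0 : PowerSeries.constantCoeff (R := R) C = 1)
    (h1 : C * PowerSeries.rescale (-1) C = 1) : memBR (seqOf C) := by
  constructor
  · simp [seqOf, PowerSeries.coeff_zero_eq_constantCoeff, h0]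
  · rw [← seqOf_rescale, ← seqOf_mul, h1, seqOf_one]

/-- exponential generating function of a sequence -/
noncomputable def egf (a : ℕ → R) : PowerSeries R :=
  PowerSeries.mk fun n => algebraMap ℚ R (1 / n.factorial) * a n

lemma seqOf_egf (a : ℕ → R) : seqOf (egf a) = a := by
  funext n
  simp only [seqOf, egf, PowerSeries.coeff_mk, ← mul_assoc]
  have : (n.factorial : R) * algebraMap ℚ R (1 / n.factorial) = 1 := by
    have h : (n.factorial : R) = algebraMap ℚ R (n.factorial : ℚ) := by simp
    rw [h, ← map_mul]
    rw [mul_one_div, div_self (by exact_mod_cast n.factorial_ne_zero), map_one]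
  rw [this, one_mul]

lemma constantCoeff_cosS : PowerSeries.constantCoeff (R := R) cosS = 1 := by
  rw [← PowerSeries.coeff_zero_eq_constantCoeff]
  simp [cosS]

lemma constantCoeff_sinS : PowerSeries.constantCoeff (R := R) sinS = 0 := by
  rw [← PowerSeries.coeff_zero_eq_constantCoeff]
  simp [sinS]

lemma rescale_cosS : PowerSeries.rescale (-1) (cosS : PowerSeries R) = cosS := by
  ext n
  rw [PowerSeries.coeff_rescale]
  simp only [cosS, PowerSeries.coeff_mk]
  by_cases h : n % 2 = 0
  · rw [(Even.neg_one_pow (Nat.even_iff.mpr h) : ((-1 : R)) ^ n = 1), one_mul]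
  · simp [h]

lemma rescale_sinS : PowerSeries.rescale (-1) (sinS : PowerSeries R) = -sinS := by
  ext n
  rw [PowerSeries.coeff_rescale, map_neg]
  simp only [sinS, PowerSeries.coeff_mk]
  by_cases h : n % 2 = 1
  · rw [(Odd.neg_one_pow (Nat.odd_iff.mpr h) : ((-1 : R)) ^ n = -1)]; ring
  · simp [h]

lemma deriv_sinS : PowerSeries.derivativeFun (sinS : PowerSeries R) = cosS := by
  ext n
  erw [PowerSeries.coeff_derivativeFun]
  simp only [sinS, cosS, PowerSeries.coeff_mk]
  by_cases h : n % 2 = 0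
  · have h1 : (n + 1) % 2 = 1 := by omega
    have h2 : (n + 1) / 2 = n / 2 := by omega
    rw [if_pos h1, if_pos h, h2]
    have hc : ((n : R) + 1) = algebraMap ℚ R ((n : ℚ) + 1) := by push_cast; simp
    rw [hc, ← map_mul]
    congr 1
    rw [Nat.factorial_succ]
    have h3 : ((n.factorial : ℚ)) ≠ 0 := by exact_mod_cast n.factorial_ne_zero
    field_simp
    push_cast
    ring
  · have h1 : (n + 1) % 2 ≠ 1 := by omega
    rw [if_neg h1, if_neg h, zero_mul]

lemma deriv_cosS : PowerSeries.derivativeFun (cosS : PowerSeries R) = -sinS := by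
  ext n
  erw [PowerSeries.coeff_derivativeFun, map_neg]
  simp only [sinS, cosS, PowerSeries.coeff_mk]
  by_cases h : n % 2 = 1
  · have h1 : (n + 1) % 2 = 0 := by omega
    have h2 : (n + 1) / 2 = n / 2 + 1 := by omega
    rw [if_pos h1, if_pos h, h2]
    have hc : ((n : R) + 1) = algebraMap ℚ R ((n : ℚ) + 1) := by push_cast; simp
    rw [hc, ← map_mul, ← map_neg]
    congr 1
    rw [Nat.factorial_succ, pow_succ]
    have h3 : ((n.factorial : ℚ)) ≠ 0 := by exact_mod_cast n.factorial_ne_zero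
    field_simp
    push_cast
    ring
  · have h1 : (n + 1) % 2 ≠ 0 := by omega
    rw [if_neg h1, if_neg h, zero_mul, neg_zero]

lemma pythagoras : (cosS * cosS + sinS * sinS : PowerSeries R) = 1 := by
  have hd : PowerSeries.derivativeFun (cosS * cosS + sinS * sinS : PowerSeries R) = 0 := by
    rw [PowerSeries.derivativeFun_add, PowerSeries.derivativeFun_mul,
      PowerSeries.derivativeFun_mul, deriv_cosS, deriv_sinS]
    simp only [smul_eq_mul]
    ring
  ext n
  cases n with
  | zero =>
    simp only [PowerSeries.coeff_zero_eq_constantCoeff, map_add, map_mul, map_one,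
      constantCoeff_cosS, constantCoeff_sinS]
    ring
  | succ m =>
    have := congrArg (PowerSeries.coeff (R := R) m) hd
    erw [PowerSeries.coeff_derivativeFun, map_zero] at this
    have hu : IsUnit (((m : R) + 1)) := by
      have : ((m : R) + 1) = ((m + 1 : ℕ) : R) := by push_cast; ring
      rw [this]
      exact isUnit_nat_cast_of_ne_zero _ (Nat.succ_ne_zero m)
    have hz : PowerSeries.coeff (R := R) (m + 1) (cosS * cosS + sinS * sinS : PowerSeries R) = 0 := by
      have := hu.mul_left_cancel (a := ((m : R) + 1))
        (b := PowerSeries.coeff (R := R) (m + 1) (cosS * cosS + sinS * sinS : PowerSeries R)) (c := 0)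
      apply this
      rw [mul_zero, mul_comm]
      exact ‹PowerSeries.coeff (R := R) (m + 1) (cosS * cosS + sinS * sinS) * ((m : R) + 1) = 0›
    rw [hz, PowerSeries.coeff_one, if_neg (Nat.succ_ne_zero m)]

/-- If `S = sec` and `T = tan` (i.e. `cos·S = 1`, `cos·T = sin`), then
`B = sec + tan` satisfies `B(t)B(-t) = 1`; hence the Euler zigzag numbers
`β_n = n!·(coefficient of tⁿ in B)` lie in `B_R`, and `B_R` is closed under the
Boustrophedon transform `a ↦ β ⋆ a`. -/
theorem sec_add_tan_mem_BR (S T : PowerSeries R)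
    (hsec : cosS * S = 1) (htan : cosS * T = sinS) :
    (S + T) * PowerSeries.rescale (-1) (S + T) = 1 ∧
    memBR (fun n => (n.factorial : R) * PowerSeries.coeff (R := R) n (S + T)) ∧
    (∀ a : ℕ → R, memBR a →
      memBR (bconv (fun n => (n.factorial : R) * PowerSeries.coeff (R := R) n (S + T)) a)) := by
  have hS' : cosS * PowerSeries.rescale (-1) S = 1 := by
    have := congrArg (PowerSeries.rescale (-1)) hsec
    rwa [map_mul, map_one, rescale_cosS] at this
  have hT' : cosS * PowerSeries.rescale (-1) T = -sinS := by
    have := congrArg (PowerSeries.rescale (-1)) htan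
    rwa [map_mul, rescale_cosS, rescale_sinS] at this
  have hcu : IsUnit (cosS : PowerSeries R) :=
    PowerSeries.isUnit_iff_constantCoeff.mpr (by rw [constantCoeff_cosS]; exact isUnit_one)
  have hcu2 : IsUnit (cosS * cosS : PowerSeries R) := hcu.mul hcu
  have part1 : (S + T) * PowerSeries.rescale (-1) (S + T) = 1 := by
    apply hcu2.mul_left_cancel
    rw [map_add]
    calc cosS * cosS * ((S + T) * (PowerSeries.rescale (-1) S + PowerSeries.rescale (-1) T))
        = (cosS * S + cosS * T) *
          (cosS * PowerSeries.rescale (-1) S + cosS * PowerSeries.rescale (-1) T) := by ring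
      _ = (1 + sinS) * (1 + -sinS) := by rw [hsec, htan, hS', hT']
      _ = 1 - sinS * sinS := by ring
      _ = cosS * cosS := by linear_combination -(pythagoras (R := R))
      _ = cosS * cosS * 1 := by ring
  have hccS : PowerSeries.constantCoeff (R := R) S = 1 := by
    have := congrArg (PowerSeries.constantCoeff (R := R)) hsec
    rwa [map_mul, map_one, constantCoeff_cosS, one_mul] at this
  have hccT : PowerSeries.constantCoeff (R := R) T = 0 := by
    have := congrArg (PowerSeries.constantCoeff (R := R)) htan
    rwa [map_mul, constantCoeff_cosS, constantCoeff_sinS, one_mul] at this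
  have hccB : PowerSeries.constantCoeff (R := R) (S + T) = 1 := by
    rw [map_add, hccS, hccT, add_zero]
  have part2 : memBR (seqOf (S + T)) := memBR_seqOf hccB part1
  refine ⟨part1, part2, ?_⟩
  intro a ha
  have hA : egf a * PowerSeries.rescale (-1) (egf a) = 1 := by
    apply seqOf_inj
    rw [seqOf_mul, seqOf_rescale, seqOf_egf, seqOf_one]
    exact ha.2
  have hconv : bconv (seqOf (S + T)) a = seqOf ((S + T) * egf a) := by
    rw [seqOf_mul, seqOf_egf]
  show memBR (bconv (seqOf (S + T)) a)
  rw [hconv]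
  apply memBR_seqOf
  · rw [map_mul, hccB, one_mul]
    have : PowerSeries.constantCoeff (R := R) (egf a) = a 0 := by
      rw [← PowerSeries.coeff_zero_eq_constantCoeff]
      simp [egf]
    rw [this, ha.1]
  · rw [map_mul]
    calc (S + T) * egf a *
          (PowerSeries.rescale (-1) (S + T) * PowerSeries.rescale (-1) (egf a))
        = ((S + T) * PowerSeries.rescale (-1) (S + T)) *
          (egf a * PowerSeries.rescale (-1) (egf a)) := by ring
      _ = 1 := by rw [part1, hA, one_mul]
end

section
/- For a ∈ B_R, the even-index terms are determined by the odd-index terms: a_{2n} = (2n)! Σ_{k=0}^n C(1/2, k) B_{n+k,2k}(x_1,...,x_{n-k+1}) for all n ≥ 1, where x_i = a_{2i-1}/(2i-1)! and C(1/2,k) is the generalized binomial coefficient. -/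
open Finset PowerSeries

variable {R : Type*} [CommRing R] [Algebra ℚ R]

/-- Generalized binomial coefficient `C(1/2, k)`. -/
def halfChoose (k : ℕ) : ℚ :=
  (∏ j ∈ range k, ((1 : ℚ) / 2 - j)) / k.factorial

/-! ### Auxiliary material -/

section QSide

lemma halfChoose_eq_ringChoose (k : ℕ) : halfChoose k = Ring.choose ((1:ℚ)/2) k := by
  have hd : (descPochhammer ℤ k).smeval ((1:ℚ)/2) = ∏ j ∈ range k, ((1:ℚ)/2 - j) := by
    induction k with
    | zero => simp [descPochhammer_zero, Polynomial.smeval_one]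
    | succ k ih =>
        rw [descPochhammer_succ_right, Polynomial.smeval_mul, ih, prod_range_succ,
          Polynomial.smeval_sub, Polynomial.smeval_X, Polynomial.smeval_natCast]
        norm_num
  have h2 := Ring.descPochhammer_eq_factorial_smul_choose ((1:ℚ)/2) k
  rw [hd] at h2
  rw [halfChoose, h2, nsmul_eq_mul]
  have : (k.factorial : ℚ) ≠ 0 := Nat.cast_ne_zero.mpr k.factorial_ne_zero
  field_simp

lemma vand_half (j : ℕ) :
    (∑ p ∈ antidiagonal j, halfChoose p.1 * halfChoose p.2) = if j ≤ 1 then 1 else 0 := by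
  have h : (∑ p ∈ antidiagonal j, halfChoose p.1 * halfChoose p.2)
      = ∑ p ∈ antidiagonal j, Ring.choose ((1:ℚ)/2) p.1 * Ring.choose ((1:ℚ)/2) p.2 := by
    refine Finset.sum_congr rfl fun p _ => ?_
    rw [halfChoose_eq_ringChoose, halfChoose_eq_ringChoose]
  rw [h, ← Ring.add_choose_eq j (Commute.all _ _)]
  have h1 : ((1:ℚ)/2 + (1:ℚ)/2) = ((1:ℕ) : ℚ) := by norm_num
  rw [h1, Ring.choose_natCast]
  rcases j with _ | _ | j <;> simp [Nat.choose_eq_zero_of_lt]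

lemma halfChoose_zero : halfChoose 0 = 1 := by simp [halfChoose]

end QSide

section Phi
variable {A : Type*} [CommRing A]

/-- Substitution `X ↦ X^2`, coefficientwise. -/
noncomputable def Phi (f : A⟦X⟧) : A⟦X⟧ :=
  PowerSeries.mk fun m => if Even m then coeff (R := A) (m / 2) f else 0

lemma coeff_Phi (f : A⟦X⟧) (m : ℕ) :
    coeff (R := A) m (Phi f) = if Even m then coeff (R := A) (m / 2) f else 0 := coeff_mk _ _

lemma coeff_Phi_even (f : A⟦X⟧) (s : ℕ) : coeff (R := A) (2 * s) (Phi f) = coeff (R := A) s f := by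
  rw [coeff_Phi, if_pos ⟨s, (two_mul s)⟩, (by omega : 2 * s / 2 = s)]

lemma coeff_Phi_odd (f : A⟦X⟧) {m : ℕ} (h : ¬ Even m) : coeff (R := A) m (Phi f) = 0 := by
  rw [coeff_Phi, if_neg h]

lemma sum_even_support {M : Type*} [AddCommMonoid M] (s : ℕ) (F : ℕ → M)
    (hF : ∀ p, ¬ Even p → F p = 0) :
    ∑ p ∈ range (2 * s + 1), F p = ∑ t ∈ range (s + 1), F (2 * t) := by
  rw [← Finset.sum_image (f := F) (g := fun t => 2 * t)
    (by intro a _ b _ h; simp only [] at h; omega)]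
  symm
  apply Finset.sum_subset
  · intro p hp
    simp only [Finset.mem_image, Finset.mem_range] at hp ⊢
    obtain ⟨t, ht, rfl⟩ := hp
    omega
  · intro p hp hni
    refine hF p ?_
    rintro ⟨t, rfl⟩
    simp only [Finset.mem_image, Finset.mem_range] at hp hni
    exact hni ⟨t, by omega, by omega⟩

lemma Phi_mul (f g : A⟦X⟧) : Phi (f * g) = Phi f * Phi g := by
  ext m
  rw [coeff_mul]
  rcases Nat.even_or_odd m with he | ho
  · obtain ⟨s, rfl⟩ := he
    have h2 : s + s = 2 * s := (two_mul s).symm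
    rw [h2, coeff_Phi_even, coeff_mul, Finset.Nat.sum_antidiagonal_eq_sum_range_succ_mk,
      Finset.Nat.sum_antidiagonal_eq_sum_range_succ_mk]
    rw [show (2 * s).succ = 2 * s + 1 from rfl,
      sum_even_support s (fun p => coeff (R := A) p (Phi f) * coeff (R := A) (2 * s - p) (Phi g))
        (fun p hp => by rw [coeff_Phi_odd f hp, zero_mul])]
    refine Finset.sum_congr rfl fun t ht => ?_
    simp only [Finset.mem_range] at ht
    rw [show 2 * s - 2 * t = 2 * (s - t) by omega, coeff_Phi_even, coeff_Phi_even]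
  · rw [coeff_Phi_odd _ (Nat.not_even_iff_odd.mpr ho)]
    symm
    apply Finset.sum_eq_zero
    intro p hp
    rw [Finset.HasAntidiagonal.mem_antidiagonal] at hp
    rcases Nat.even_or_odd p.1 with h1 | h1
    · have h2 : ¬ Even p.2 := by
        intro h2
        exact (Nat.not_even_iff_odd.mpr ho) (hp ▸ Even.add h1 h2)
      rw [coeff_Phi_odd g h2, mul_zero]
    · rw [coeff_Phi_odd f (Nat.not_even_iff_odd.mpr h1), zero_mul]

lemma Phi_one : Phi (1 : A⟦X⟧) = 1 := by
  ext m
  rw [coeff_Phi]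
  rcases Nat.even_or_odd m with he | ho
  · obtain ⟨s, rfl⟩ := he
    rw [if_pos ⟨s, rfl⟩, coeff_one, coeff_one]
    by_cases hs : s = 0 <;> simp [hs]
    omega
  · obtain ⟨t, rfl⟩ := ho
    rw [if_neg (Nat.not_even_iff_odd.mpr ⟨t, rfl⟩), coeff_one, if_neg (by omega)]

lemma Phi_pow (f : A⟦X⟧) (k : ℕ) : Phi (f ^ k) = (Phi f) ^ k := by
  induction k with
  | zero => simpa using Phi_one
  | succ k ih => rw [pow_succ, pow_succ, Phi_mul, ih]

end Phi

section Series

/-- The even part of the exponential generating function. -/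
noncomputable def Eser (a : ℕ → R) : R⟦X⟧ :=
  PowerSeries.mk fun m => if Even m then algebraMap ℚ R (1 / m.factorial) * a m else 0

/-- The odd part of the exponential generating function. -/
noncomputable def Oser (a : ℕ → R) : R⟦X⟧ :=
  PowerSeries.mk fun m => if Even m then 0 else algebraMap ℚ R (1 / m.factorial) * a m

/-- The binomial series `∑ C(1/2,k) Y^k` evaluated at `Oser a ^ 2`. -/
noncomputable def Sser (a : ℕ → R) : R⟦X⟧ :=
  PowerSeries.mk fun m =>
    ∑ k ∈ range (m + 1), algebraMap ℚ R (halfChoose k) * coeff (R := R) m ((Oser a * Oser a) ^ k)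

/-- Truncated binomial polynomial. -/
noncomputable def PN (N : ℕ) : Polynomial ℚ :=
  ∑ k ∈ range (N + 1), Polynomial.C (halfChoose k) * Polynomial.X ^ k

lemma coeff_PN (N k : ℕ) : (PN N).coeff k = if k ≤ N then halfChoose k else 0 := by
  rw [PN, Polynomial.finset_sum_coeff]
  simp only [Polynomial.coeff_C_mul, Polynomial.coeff_X_pow, mul_ite, mul_one, mul_zero]
  rw [Finset.sum_ite_eq (range (N + 1)) k halfChoose]
  simp [Nat.lt_succ_iff]

lemma natDegree_PN (N : ℕ) : (PN N).natDegree ≤ N :=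
  Polynomial.natDegree_le_iff_coeff_eq_zero.mpr fun M hM => by
    rw [coeff_PN, if_neg (by omega)]

lemma constantCoeff_Oser (a : ℕ → R) : constantCoeff (R := R) (Oser a) = 0 := by
  rw [← coeff_zero_eq_constantCoeff, Oser, coeff_mk, if_pos Even.zero]

lemma coeff_OOpow_eq_zero (a : ℕ → R) {k m : ℕ} (hm : m < 2 * k) :
    coeff (R := R) m ((Oser a * Oser a) ^ k) = 0 := by
  have hX : (X : R⟦X⟧) ∣ Oser a := X_dvd_iff.mpr (constantCoeff_Oser a)
  have hdvd : (X : R⟦X⟧) ^ (2 * k) ∣ (Oser a * Oser a) ^ k := by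
    have h1 : (X * X : R⟦X⟧) ∣ Oser a * Oser a := mul_dvd_mul hX hX
    have h2 : (X : R⟦X⟧) ^ (2 * k) = (X * X) ^ k := by
      rw [← sq, ← pow_mul]
    rw [h2]
    exact pow_dvd_pow_of_dvd h1 k
  exact X_pow_dvd_iff.mp hdvd m hm

lemma coeff_aeval_PN (a : ℕ → R) {N m : ℕ} (hmN : m ≤ N) :
    coeff (R := R) m (Polynomial.aeval (Oser a * Oser a) (PN N)) = coeff (R := R) m (Sser a) := by
  rw [PN, map_sum, map_sum]
  simp only [map_mul, Polynomial.aeval_C, map_pow, Polynomial.aeval_X,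
    PowerSeries.algebraMap_apply, coeff_C_mul]
  rw [Sser, coeff_mk]
  refine (Finset.sum_subset ?_ ?_).symm
  · intro x hx
    simp only [Finset.mem_range] at hx ⊢
    omega
  · intro x hx hnx
    simp only [Finset.mem_range] at hx hnx
    rw [coeff_OOpow_eq_zero a (by omega), mul_zero]

lemma Sser_sq (a : ℕ → R) : Sser a * Sser a = 1 + Oser a * Oser a := by
  ext m
  rw [coeff_mul]
  have h1 : ∀ p ∈ antidiagonal m, coeff (R := R) p.1 (Sser a) * coeff (R := R) p.2 (Sser a)
      = coeff (R := R) p.1 (Polynomial.aeval (Oser a * Oser a) (PN m)) *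
        coeff (R := R) p.2 (Polynomial.aeval (Oser a * Oser a) (PN m)) := by
    intro p hp
    rw [coeff_aeval_PN a (Finset.HasAntidiagonal.antidiagonal.fst_le hp), coeff_aeval_PN a (Finset.HasAntidiagonal.antidiagonal.snd_le hp)]
  rw [Finset.sum_congr rfl h1, ← coeff_mul, ← map_mul]
  have hdeg : (PN m * PN m).natDegree < 2 * m + 2 :=
    lt_of_le_of_lt (Polynomial.natDegree_mul_le.trans
      (add_le_add (natDegree_PN m) (natDegree_PN m))) (by omega)
  rw [Polynomial.aeval_eq_sum_range' hdeg, map_sum]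
  simp only [coeff_smul]
  have hcoeffsq : ∀ j, j ≤ m → (PN m * PN m).coeff j = if j ≤ 1 then 1 else 0 := by
    intro j hj
    rw [Polynomial.coeff_mul]
    have h2 : ∀ p ∈ antidiagonal j, (PN m).coeff p.1 * (PN m).coeff p.2
        = halfChoose p.1 * halfChoose p.2 := by
      intro p hp
      rw [coeff_PN, coeff_PN, if_pos ((Finset.HasAntidiagonal.antidiagonal.fst_le hp).trans hj),
        if_pos ((Finset.HasAntidiagonal.antidiagonal.snd_le hp).trans hj)]
    rw [Finset.sum_congr rfl h2, vand_half]
  have hzero : ∀ j ∈ range (2 * m + 2), j ∉ range 2 →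
      (PN m * PN m).coeff j • coeff (R := R) m ((Oser a * Oser a) ^ j) = 0 := by
    intro j hj hj2
    simp only [Finset.mem_range] at hj hj2
    by_cases hjm : j ≤ m
    · rw [hcoeffsq j hjm, if_neg (by omega), zero_smul]
    · rw [coeff_OOpow_eq_zero a (by omega), smul_zero]
  rw [← Finset.sum_subset (by intro x hx; simp only [Finset.mem_range] at hx ⊢; omega) hzero]
  rw [Finset.sum_range_succ, Finset.sum_range_one]
  rw [hcoeffsq 0 (by omega), if_pos (by omega), pow_zero, one_smul, map_add]
  congr 1
  rcases Nat.eq_zero_or_pos m with hm | hm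
  · subst hm
    rw [pow_one]
    have h0 : coeff (R := R) 0 (Oser a * Oser a) = 0 := by
      rw [coeff_zero_eq_constantCoeff, map_mul, constantCoeff_Oser, zero_mul]
    rw [h0, smul_zero]
  · rw [hcoeffsq 1 (by omega), if_pos (by omega), one_smul, pow_one]

end Series

/-- For `a ∈ B_R`, the even-indexed terms are determined by the odd-indexed ones:
`a (2n) = (2n)! ∑_{k=0}^n C(1/2,k) B_{n+k,2k}(x)` with `x_i = a (2i-1)/(2i-1)!`. -/
theorem BR_even_terms (a : ℕ → R) (h0 : a 0 = 1) (hBR : bconv a (alt a) = eseq) :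
    ∀ n : ℕ, 1 ≤ n →
      a (2 * n) = ((2 * n).factorial : R) *
        ∑ k ∈ range (n + 1),
          algebraMap ℚ R (halfChoose k) *
            pBell (n + k) (2 * k)
              (fun i => algebraMap ℚ R (1 / (2 * i - 1).factorial) * a (2 * i - 1)) := by
  intro n _
  have hcoeff_add : ∀ m, coeff (R := R) m (Eser a + Oser a) = algebraMap ℚ R (1 / m.factorial) * a m := by
    intro m
    rw [map_add, Eser, Oser, coeff_mk, coeff_mk]
    by_cases h : Even m <;> simp [h]
  have hcoeff_sub : ∀ m, coeff (R := R) m (Eser a - Oser a)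
      = (-1 : R) ^ m * (algebraMap ℚ R (1 / m.factorial) * a m) := by
    intro m
    rw [map_sub, Eser, Oser, coeff_mk, coeff_mk]
    by_cases h : Even m
    · rw [if_pos h, if_pos h, h.neg_one_pow, one_mul, sub_zero]
    · rw [if_neg h, if_neg h, (Nat.not_even_iff_odd.mp h).neg_one_pow, zero_sub, neg_one_mul]
  have hA : (Eser a + Oser a) * (Eser a - Oser a) = 1 := by
    ext m
    rw [coeff_mul, coeff_one]
    have key : ∀ p ∈ antidiagonal m,
        coeff (R := R) p.1 (Eser a + Oser a) * coeff (R := R) p.2 (Eser a - Oser a)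
        = algebraMap ℚ R (1 / m.factorial) *
          ((m.choose p.1 : R) * a p.1 * ((-1 : R) ^ (m - p.1) * a (m - p.1))) := by
      intro p hp
      rw [Finset.HasAntidiagonal.mem_antidiagonal] at hp
      rw [hcoeff_add, hcoeff_sub]
      have hp2 : p.2 = m - p.1 := by omega
      rw [hp2]
      have h1 : (p.1.factorial : ℚ) ≠ 0 := Nat.cast_ne_zero.mpr (Nat.factorial_ne_zero _)
      have h2 : (((m - p.1).factorial : ℚ)) ≠ 0 := Nat.cast_ne_zero.mpr (Nat.factorial_ne_zero _)
      have h3 : ((m.factorial : ℚ)) ≠ 0 := Nat.cast_ne_zero.mpr (Nat.factorial_ne_zero _)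
      have hfac : (1 / p.1.factorial : ℚ) * (1 / (m - p.1).factorial)
          = (1 / m.factorial) * (m.choose p.1) := by
        rw [Nat.cast_choose ℚ (by omega : p.1 ≤ m)]
        field_simp
      calc (algebraMap ℚ R (1 / p.1.factorial) * a p.1) *
            ((-1 : R) ^ (m - p.1) * (algebraMap ℚ R (1 / (m - p.1).factorial) * a (m - p.1)))
          = algebraMap ℚ R ((1 / p.1.factorial) * (1 / (m - p.1).factorial)) *
            (a p.1 * ((-1 : R) ^ (m - p.1) * a (m - p.1))) := by rw [map_mul]; ring
        _ = algebraMap ℚ R ((1 / m.factorial) * (m.choose p.1)) *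
            (a p.1 * ((-1 : R) ^ (m - p.1) * a (m - p.1))) := by rw [hfac]
        _ = _ := by rw [map_mul, map_natCast]; ring
    rw [Finset.sum_congr rfl key, ← Finset.mul_sum,
      Finset.Nat.sum_antidiagonal_eq_sum_range_succ_mk]
    have hb := congrFun hBR m
    simp only [bconv, alt, eseq] at hb
    simp only []
    rw [show m.succ = m + 1 from rfl, hb]
    by_cases hm : m = 0 <;> simp [hm]
  have hE2 : Eser a * Eser a = 1 + Oser a * Oser a := by linear_combination hA
  have hE0 : constantCoeff (R := R) (Eser a) = 1 := by
    rw [← coeff_zero_eq_constantCoeff, Eser, coeff_mk, if_pos Even.zero]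
    simp [h0]
  have hS0 : constantCoeff (R := R) (Sser a) = 1 := by
    rw [← coeff_zero_eq_constantCoeff, Sser, coeff_mk]
    simp [halfChoose_zero]
  have hES : Eser a = Sser a := by
    have hsq : (Eser a - Sser a) * (Eser a + Sser a) = 0 := by
      linear_combination hE2 - Sser_sq a
    have hunit : IsUnit (Eser a + Sser a) := by
      rw [PowerSeries.isUnit_iff_constantCoeff, map_add, hE0, hS0]
      refine IsUnit.of_mul_eq_one (algebraMap ℚ R (1/2)) ?_
      have h12 : (1 + 1 : R) = algebraMap ℚ R 2 := by
        rw [map_ofNat]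
        norm_num
      rw [h12, ← map_mul]
      norm_num
    obtain ⟨u, hu⟩ := hunit
    have h1 : Eser a - Sser a = 0 := by
      have h2 : (Eser a - Sser a) * ((Eser a + Sser a) * (↑u⁻¹ : R⟦X⟧)) = 0 := by
        rw [← mul_assoc, hsq, zero_mul]
      rwa [← hu, Units.mul_inv, mul_one] at h2
    exact sub_eq_zero.mp h1
  have hXO : X * Oser a = Phi (PowerSeries.mk fun i =>
      if i = 0 then 0 else algebraMap ℚ R (1 / (2 * i - 1).factorial) * a (2 * i - 1)) := by
    ext m
    rcases m with _ | m'
    · rw [coeff_Phi, if_pos Even.zero, coeff_zero_eq_constantCoeff, map_mul, constantCoeff_X,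
        zero_mul, constantCoeff_mk]
      simp
    · rw [coeff_succ_X_mul, coeff_Phi, Oser, coeff_mk]
      by_cases h : Even (m' + 1)
      · obtain ⟨s, hs⟩ := h
        have hs1 : 1 ≤ s := by omega
        rw [if_neg (show ¬ Even m' by rintro ⟨t, ht⟩; omega),
          if_pos (show Even (m' + 1) from ⟨s, hs⟩), coeff_mk,
          show (m' + 1) / 2 = s by omega, if_neg (show ¬ s = 0 by omega),
          show 2 * s - 1 = m' by omega]
      · rw [if_neg h, if_pos (by rwa [Nat.even_add_one, not_not] at h)]
  have hBell : ∀ k, coeff (R := R) (2 * n) ((Oser a * Oser a) ^ k)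
      = pBell (n + k) (2 * k)
          (fun i => algebraMap ℚ R (1 / (2 * i - 1).factorial) * a (2 * i - 1)) := by
    intro k
    have h1 : (Oser a * Oser a) ^ k = Oser a ^ (2 * k) := by rw [← sq, ← pow_mul]
    rw [h1, ← coeff_X_pow_mul (Oser a ^ (2 * k)) (2 * k) (2 * n), ← mul_pow, hXO, ← Phi_pow,
      show 2 * n + 2 * k = 2 * (n + k) by ring, coeff_Phi_even]
    rfl
  have hco := congrArg (coeff (R := R) (2 * n)) hES
  rw [Eser, coeff_mk, if_pos ⟨n, two_mul n⟩, Sser, coeff_mk] at hco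
  have htrim : ∑ k ∈ range (2 * n + 1),
        algebraMap ℚ R (halfChoose k) * coeff (R := R) (2 * n) ((Oser a * Oser a) ^ k)
      = ∑ k ∈ range (n + 1),
        algebraMap ℚ R (halfChoose k) * coeff (R := R) (2 * n) ((Oser a * Oser a) ^ k) := by
    refine (Finset.sum_subset (by intro x hx; simp only [Finset.mem_range] at *; omega) ?_).symm
    intro x hx hnx
    simp only [Finset.mem_range] at hx hnx
    rw [coeff_OOpow_eq_zero a (by omega), mul_zero]
  rw [htrim] at hco
  have hco2 : algebraMap ℚ R (1 / (2 * n).factorial) * a (2 * n)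
      = ∑ k ∈ range (n + 1), algebraMap ℚ R (halfChoose k) *
          pBell (n + k) (2 * k)
            (fun i => algebraMap ℚ R (1 / (2 * i - 1).factorial) * a (2 * i - 1)) := by
    rw [hco]
    exact Finset.sum_congr rfl fun k _ => by rw [hBell k]
  have hfac : ((2 * n).factorial : R) * algebraMap ℚ R (1 / (2 * n).factorial) = 1 := by
    rw [show ((2 * n).factorial : R) = algebraMap ℚ R ((2 * n).factorial : ℚ) from
      (map_natCast _ _).symm, ← map_mul, mul_one_div,
      div_self (Nat.cast_ne_zero.mpr (Nat.factorial_ne_zero _)), map_one]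
  calc a (2 * n) = ((2 * n).factorial : R) *
        (algebraMap ℚ R (1 / (2 * n).factorial) * a (2 * n)) := by
        rw [← mul_assoc, hfac, one_mul]
    _ = _ := by rw [hco2]
end
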